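/- arXiv:1807.01053 — 2 statements merged into one kernel-verified Lean document; each statement's English description precedes it below -/
import Mathlib

section
/- Kleisli composition of H₀M is ω-continuous in the function argument: for every ω-chain of functions f₀, f₁, … : X → H₀M Y with fᵢ x ⊑ fᵢ₊₁ x for all i and x, and every (d,e) ∈ H₀M X, one has (⊔ᵢ fᵢ)^†(d,e) = ⊔ᵢ fᵢ^†(d,e), where (⊔ᵢ fᵢ) x = ⊔ᵢ (fᵢ x). -/
open scoped ENNReal NNReal
open Classical

universe u v w

/-- Raw trajectories: a duration in `ℝ≥0∞` and a partial evolution `ℝ≥0 → Option X`. -/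
abbrev Traj (X : Type u) := ℝ≥0∞ × (ℝ≥0 → Option X)

/-- The flattening condition: if the duration is finite, the evolution is constant
from the duration onwards.  Membership in `H₀M X` means exactly `Flat`. -/
def Flat {X : Type u} (p : Traj X) : Prop :=
  ∀ t : ℝ≥0, p.1 ≤ (t : ℝ≥0∞) → p.2 t = p.2 p.1.toNNReal

/-- The unit of `H₀M`. -/
def eta {X : Type u} (x : X) : Traj X := (0, fun _ => some x)

/-- The Kleisli lifting `f^†` of the monad `H₀M`. -/
noncomputable def kl {X : Type u} {Y : Type v} (f : X → Traj Y) (p : Traj X) : Traj Y :=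
  if p.1 = ⊤ then (p.1, fun t => (p.2 t).bind fun x' => (f x').2 0)
  else
    match p.2 p.1.toNNReal with
    | none => (p.1, fun t => (p.2 t).bind fun x' => (f x').2 0)
    | some x =>
        (p.1 + (f x).1,
          fun t =>
            if (t : ℝ≥0∞) < p.1 then (p.2 t).bind fun x' => (f x').2 0
            else (f x).2 (t - p.1.toNNReal))

/-- Membership in `H₊ X ⊆ H₀M X`: the evolution is not everywhere `none`, and it is
defined at every time instant strictly below the duration. -/
def memHp {X : Type u} (p : Traj X) : Prop :=
  p.2 ≠ (fun _ => none) ∧ ∀ t : ℝ≥0, (t : ℝ≥0∞) < p.1 → p.2 t ≠ none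

/-- Membership in `H X ⊆ H₀M X`: either the evolution is total, or the duration is `∞`
and the domain of the evolution is downward closed. -/
def memH {X : Type u} (p : Traj X) : Prop :=
  (∀ t, p.2 t ≠ none) ∨
    (p.1 = ⊤ ∧ ∀ s t : ℝ≥0, s ≤ t → p.2 t ≠ none → p.2 s ≠ none)

/-- The approximation order `⊑` on `H₀M X`. -/
def TrajLE {X : Type u} (p q : Traj X) : Prop :=
  p.1 ≤ q.1 ∧ (∀ t, p.2 t ≠ none → q.2 t = p.2 t) ∧
    (p.1 ≠ ⊤ → p.2 p.1.toNNReal ≠ none → p.1 = q.1)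

/-- Join of an ω-chain in `H₀M X`: the duration is the supremum of the durations, and
the evolution at `t` is the common value `(c i).2 t` whenever it is `≠ none` for some
`i`, and `none` otherwise. -/
noncomputable def chainJoin {X : Type u} (c : ℕ → Traj X) : Traj X :=
  (⨆ i, (c i).1,
    fun t => if h : ∃ i, (c i).2 t ≠ none then (c h.choose).2 t else none)

/-- `d⋆ = sup { s < d ∣ e is defined on [0, s) }`. -/
noncomputable def dstar {X : Type u} (p : Traj X) : ℝ≥0∞ :=
  sSup {s : ℝ≥0∞ | s < p.1 ∧ ∀ t : ℝ≥0, (t : ℝ≥0∞) < s → p.2 t ≠ none}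

/-- The retraction `ρ : H₀M X → H₀M X` onto `H X`. -/
noncomputable def rho {X : Type u} (p : Traj X) : Traj X :=
  ((if ∀ t, p.2 t ≠ none then p.1 else ⊤),
    fun t =>
      if (t : ℝ≥0∞) ≤ dstar p then p.2 t
      else if ∀ t', p.2 t' ≠ none then p.2 (dstar p).toNNReal else none)

/-- The iterates `f⁽ⁿ⁾` of `f : X → H₀M (Y ⊕ X)`. -/
noncomputable def iter {X Y : Type u} (f : X → Traj (Y ⊕ X)) : ℕ → X → Traj Y
  | 0, _ => (0, fun _ => none)
  | n + 1, x => kl (Sum.elim eta (iter f n)) (f x)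

/-- The least-fixpoint iteration `f^‡ x = ⊔ₙ f⁽ⁿ⁾ x`. -/
noncomputable def iterStar {X Y : Type u} (f : X → Traj (Y ⊕ X)) (x : X) : Traj Y :=
  chainJoin fun n => iter f n x

/-- `f : X → H₊ (A ⊕ B)` is progressive in `B` (guarded in the second summand). -/
def Prog {X : Type u} {A B : Type v} (f : X → Traj (A ⊕ B)) : Prop :=
  ∀ x, ∃ a : A, (f x).2 0 = some (Sum.inl a)

section Aux

variable {X : Type u}

lemma chain_mono {c : ℕ → Traj X} (hc : ∀ i, TrajLE (c i) (c (i+1))) :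
    ∀ {i j : ℕ}, i ≤ j → ∀ t, (c i).2 t ≠ none → (c j).2 t = (c i).2 t := by
  intro i j hij t h
  induction j, hij using Nat.le_induction with
  | base => rfl
  | succ j hij ih =>
    have hne : (c j).2 t ≠ none := by rw [ih]; exact h
    rw [(hc j).2.1 t hne, ih]

lemma chainJoin_ev_eq {c : ℕ → Traj X}
    (mono : ∀ {i j : ℕ}, i ≤ j → ∀ t, (c i).2 t ≠ none → (c j).2 t = (c i).2 t)
    (t : ℝ≥0) {j : ℕ} (hj : (c j).2 t ≠ none) :
    (chainJoin c).2 t = (c j).2 t := by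
  have hex : ∃ i, (c i).2 t ≠ none := ⟨j, hj⟩
  show (if h : ∃ i, (c i).2 t ≠ none then (c h.choose).2 t else none) = (c j).2 t
  rw [dif_pos hex]
  have hk := hex.choose_spec
  rcases le_total hex.choose j with h | h
  · exact (mono h t hk).symm
  · exact mono h t hj

lemma chainJoin_ev_none {c : ℕ → Traj X} (t : ℝ≥0)
    (h : ∀ i, (c i).2 t = none) : (chainJoin c).2 t = none := by
  show (if h : ∃ i, (c i).2 t ≠ none then (c h.choose).2 t else none) = none
  rw [dif_neg]
  push_neg
  simpa using h

end Aux

/-- Kleisli composition of `H₀M` is ω-continuous in the function argument. -/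
theorem kl_continuous_fun {X : Type u} {Y : Type v} (F : ℕ → X → Traj Y)
    (hflat : ∀ i x, Flat (F i x)) (hchain : ∀ i x, TrajLE (F i x) (F (i + 1) x))
    (p : Traj X) (hp : Flat p) :
    kl (fun x => chainJoin fun i => F i x) p = chainJoin fun i => kl (F i) p := by
  set G : X → Traj Y := fun x => chainJoin fun i => F i x with hG
  have monoF : ∀ (x : X) {i j : ℕ}, i ≤ j → ∀ t, (F i x).2 t ≠ none →
      (F j x).2 t = (F i x).2 t := by
    intro x i j hij t h
    exact chain_mono (fun i => hchain i x) hij t h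
  have hGev : ∀ (x : X) (t : ℝ≥0) {j : ℕ}, (F j x).2 t ≠ none →
      (G x).2 t = (F j x).2 t := fun x t j hj => chainJoin_ev_eq (monoF x) t hj
  have hGevn : ∀ (x : X) (t : ℝ≥0), (∀ i, (F i x).2 t = none) → (G x).2 t = none :=
    fun x t h => chainJoin_ev_none t h
  set c : ℕ → Traj Y := fun i => kl (F i) p with hc
  by_cases hd : p.1 = ⊤
  · -- duration infinite
    have hL : kl G p = (p.1, fun t => (p.2 t).bind fun x' => (G x').2 0) := by
      simp [kl, hd]
    have hc1 : ∀ i, (c i).1 = p.1 := fun i => by simp [hc, kl, hd]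
    have hc2 : ∀ i t, (c i).2 t = (p.2 t).bind fun x' => (F i x').2 0 := fun i t => by
      simp [hc, kl, hd]
    have mono_c : ∀ {i j : ℕ}, i ≤ j → ∀ t, (c i).2 t ≠ none → (c j).2 t = (c i).2 t := by
      intro i j hij t h
      rw [hc2, hc2] at *
      cases hpt : p.2 t with
      | none => rfl
      | some x' =>
        rw [hpt] at h
        simp only [Option.bind_some] at h ⊢
        exact monoF x' hij 0 h
    rw [hL]
    refine Prod.ext ?_ ?_
    · show p.1 = ⨆ i, (c i).1
      simp [hc1]
    · funext t
      show (p.2 t).bind (fun x' => (G x').2 0) = (chainJoin c).2 t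
      cases hpt : p.2 t with
      | none =>
        rw [Option.bind_none]
        exact (chainJoin_ev_none t fun i => by rw [hc2, hpt, Option.bind_none]).symm
      | some x' =>
        rw [Option.bind_some]
        by_cases hx : ∃ j, (F j x').2 0 ≠ none
        · obtain ⟨j, hj⟩ := hx
          rw [hGev x' 0 hj]
          have hj' : (c j).2 t ≠ none := by rw [hc2, hpt, Option.bind_some]; exact hj
          rw [chainJoin_ev_eq mono_c t hj', hc2, hpt, Option.bind_some]
        · push_neg at hx
          rw [hGevn x' 0 hx]
          exact (chainJoin_ev_none t fun i => by
            rw [hc2, hpt, Option.bind_some]; exact hx i).symm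
  · -- duration finite
    cases hpe : p.2 p.1.toNNReal with
    | none =>
      have hL : kl G p = (p.1, fun t => (p.2 t).bind fun x' => (G x').2 0) := by
        simp [kl, hd, hpe]
      have hc1 : ∀ i, (c i).1 = p.1 := fun i => by simp [hc, kl, hd, hpe]
      have hc2 : ∀ i t, (c i).2 t = (p.2 t).bind fun x' => (F i x').2 0 := fun i t => by
        simp [hc, kl, hd, hpe]
      have mono_c : ∀ {i j : ℕ}, i ≤ j → ∀ t, (c i).2 t ≠ none → (c j).2 t = (c i).2 t := by
        intro i j hij t h
        rw [hc2, hc2] at *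
        cases hpt : p.2 t with
        | none => rfl
        | some x' =>
          rw [hpt] at h
          simp only [Option.bind_some] at h ⊢
          exact monoF x' hij 0 h
      rw [hL]
      refine Prod.ext ?_ ?_
      · show p.1 = ⨆ i, (c i).1
        simp [hc1]
      · funext t
        show (p.2 t).bind (fun x' => (G x').2 0) = (chainJoin c).2 t
        cases hpt : p.2 t with
        | none =>
          rw [Option.bind_none]
          exact (chainJoin_ev_none t fun i => by rw [hc2, hpt, Option.bind_none]).symm
        | some x' =>
          rw [Option.bind_some]
          by_cases hx : ∃ j, (F j x').2 0 ≠ none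
          · obtain ⟨j, hj⟩ := hx
            rw [hGev x' 0 hj]
            have hj' : (c j).2 t ≠ none := by rw [hc2, hpt, Option.bind_some]; exact hj
            rw [chainJoin_ev_eq mono_c t hj', hc2, hpt, Option.bind_some]
          · push_neg at hx
            rw [hGevn x' 0 hx]
            exact (chainJoin_ev_none t fun i => by
              rw [hc2, hpt, Option.bind_some]; exact hx i).symm
    | some x =>
      have hL : kl G p = (p.1 + (G x).1, fun (t : ℝ≥0) =>
          if (t : ℝ≥0∞) < p.1 then (p.2 t).bind fun x' => (G x').2 0
          else (G x).2 (t - p.1.toNNReal)) := by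
        simp [kl, hd, hpe]
      have hc1 : ∀ i, (c i).1 = p.1 + (F i x).1 := fun i => by simp [hc, kl, hd, hpe]
      have hc2 : ∀ i t, (c i).2 t =
          (if (t : ℝ≥0∞) < p.1 then (p.2 t).bind fun x' => (F i x').2 0
           else (F i x).2 (t - p.1.toNNReal)) := fun i t => by
        simp [hc, kl, hd, hpe]
      have mono_c : ∀ {i j : ℕ}, i ≤ j → ∀ t, (c i).2 t ≠ none → (c j).2 t = (c i).2 t := by
        intro i j hij t h
        rw [hc2, hc2] at *
        by_cases ht : (t : ℝ≥0∞) < p.1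
        · simp only [if_pos ht] at h ⊢
          cases hpt : p.2 t with
          | none => rfl
          | some x' =>
            rw [hpt] at h
            simp only [Option.bind_some] at h ⊢
            exact monoF x' hij 0 h
        · simp only [if_neg ht] at h ⊢
          exact monoF x hij _ h
      rw [hL]
      refine Prod.ext ?_ ?_
      · show p.1 + (G x).1 = ⨆ i, (c i).1
        have : (G x).1 = ⨆ i, (F i x).1 := rfl
        rw [this]
        simp only [hc1]
        exact ENNReal.add_iSup _
      · funext t
        by_cases ht : (t : ℝ≥0∞) < p.1
        · show (if (t : ℝ≥0∞) < p.1 then (p.2 t).bind fun x' => (G x').2 0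
            else (G x).2 (t - p.1.toNNReal)) = (chainJoin c).2 t
          rw [if_pos ht]
          cases hpt : p.2 t with
          | none =>
            rw [Option.bind_none]
            exact (chainJoin_ev_none t fun i => by
              rw [hc2, if_pos ht, hpt, Option.bind_none]).symm
          | some x' =>
            rw [Option.bind_some]
            by_cases hx : ∃ j, (F j x').2 0 ≠ none
            · obtain ⟨j, hj⟩ := hx
              rw [hGev x' 0 hj]
              have hj' : (c j).2 t ≠ none := by
                rw [hc2, if_pos ht, hpt, Option.bind_some]; exact hj
              rw [chainJoin_ev_eq mono_c t hj', hc2, if_pos ht, hpt, Option.bind_some]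
            · push_neg at hx
              rw [hGevn x' 0 hx]
              exact (chainJoin_ev_none t fun i => by
                rw [hc2, if_pos ht, hpt, Option.bind_some]; exact hx i).symm
        · show (if (t : ℝ≥0∞) < p.1 then (p.2 t).bind fun x' => (G x').2 0
            else (G x).2 (t - p.1.toNNReal)) = (chainJoin c).2 t
          rw [if_neg ht]
          by_cases hx : ∃ j, (F j x).2 (t - p.1.toNNReal) ≠ none
          · obtain ⟨j, hj⟩ := hx
            rw [hGev x _ hj]
            have hj' : (c j).2 t ≠ none := by rw [hc2, if_neg ht]; exact hj
            rw [chainJoin_ev_eq mono_c t hj', hc2, if_neg ht]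
          · push_neg at hx
            rw [hGevn x _ hx]
            exact (chainJoin_ev_none t fun i => by rw [hc2, if_neg ht]; exact hx i).symm
end

section
/- The pair (ρ, υ) is an iteration-congruent retraction: for every f : X → H₀M (Y ⊕ X) and every x ∈ X, ρ(f^‡ x) = ρ((ρ ∘ f)^‡ x), where f^‡ x = ⊔ₙ f⁽ⁿ⁾ x is the least-fixpoint iteration of H₀M. -/
open scoped ENNReal NNReal
open Classical

universe u v w

section Lemmas

variable {X : Type u} {Y : Type v}

lemma kl_top (g : X → Traj Y) (p : Traj X) (h : p.1 = ⊤) :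
    kl g p = (p.1, fun t => (p.2 t).bind fun x' => (g x').2 0) := by
  rw [kl, if_pos h]

lemma kl_none (g : X → Traj Y) (p : Traj X) (h : p.1 ≠ ⊤) (h2 : p.2 p.1.toNNReal = none) :
    kl g p = (p.1, fun t => (p.2 t).bind fun x' => (g x').2 0) := by
  rw [kl, if_neg h, h2]

lemma kl_some (g : X → Traj Y) (p : Traj X) (h : p.1 ≠ ⊤) {w : X}
    (h2 : p.2 p.1.toNNReal = some w) :
    kl g p = (p.1 + (g w).1,
      fun t : ℝ≥0 => if (t : ℝ≥0∞) < p.1 then (p.2 t).bind fun x' => (g x').2 0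
        else (g w).2 (t - p.1.toNNReal)) := by
  rw [kl, if_neg h, h2]

lemma flat_eta (x : X) : Flat (eta x) := fun _ _ => rfl

lemma flat_kl {g : X → Traj Y} {p : Traj X} (hp : Flat p) (hg : ∀ x, Flat (g x)) :
    Flat (kl g p) := by
  by_cases h : p.1 = ⊤
  · rw [kl_top g p h]
    intro t ht
    exact absurd (top_le_iff.mp (h ▸ ht)) ENNReal.coe_ne_top
  · cases h2 : p.2 p.1.toNNReal with
    | none =>
      rw [kl_none g p h h2]
      intro t ht
      simp only
      rw [hp t ht]
    | some w =>
      rw [kl_some g p h h2]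
      by_cases hgw : (g w).1 = ⊤
      · intro t ht
        simp only at ht
        exact absurd (top_le_iff.mp (le_trans (by rw [hgw]; exact le_add_self) ht))
          ENNReal.coe_ne_top
      · intro t ht
        simp only at ht ⊢
        have hpt : p.1 ≤ (t : ℝ≥0∞) := le_trans le_self_add ht
        have hT : ((p.1 + (g w).1).toNNReal : ℝ≥0∞) = p.1 + (g w).1 :=
          ENNReal.coe_toNNReal (by finiteness)
        rw [if_neg (not_lt.2 hpt), if_neg (by rw [hT]; exact not_lt.2 le_self_add)]
        have e1 : (p.1 + (g w).1).toNNReal - p.1.toNNReal = (g w).1.toNNReal := by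
          rw [ENNReal.toNNReal_add h hgw]; simp
        rw [e1]
        have h2 : (g w).1 ≤ ((t - p.1.toNNReal : ℝ≥0) : ℝ≥0∞) := by
          rw [ENNReal.coe_sub]
          exact ENNReal.le_sub_of_add_le_left ENNReal.coe_ne_top (by rwa [ENNReal.coe_toNNReal h])
        rw [hg w _ h2]

lemma iter_succ {X Y : Type u} (f : X → Traj (Y ⊕ X)) (n : ℕ) (x : X) :
    iter f (n + 1) x = kl (Sum.elim eta (iter f n)) (f x) := rfl

lemma flat_iter {X Y : Type u} {f : X → Traj (Y ⊕ X)} (hf : ∀ x, Flat (f x)) :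
    ∀ n x, Flat (iter f n x) := by
  intro n
  induction n with
  | zero => intro x t _; rfl
  | succ n ih =>
    intro x
    exact flat_kl (hf x) (fun w => by cases w with
      | inl y => exact flat_eta y
      | inr z => exact ih z)

end Lemmas
section Lemmas2

variable {X : Type u}

lemma dstar_le_of_hole {p : Traj X} {t0 : ℝ≥0} (h : p.2 t0 = none) : dstar p ≤ (t0 : ℝ≥0∞) := by
  refine sSup_le fun a ha => ?_
  by_contra hc
  exact ha.2 t0 (not_le.mp hc) h

lemma le_dstar {p : Traj X} {s : ℝ≥0∞} (h1 : s < p.1)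
    (h2 : ∀ t : ℝ≥0, (t : ℝ≥0∞) < s → p.2 t ≠ none) : s ≤ dstar p :=
  le_sSup ⟨h1, h2⟩

lemma dstar_total {p : Traj X} (h : ∀ t, p.2 t ≠ none) : dstar p = p.1 := by
  refine le_antisymm (sSup_le fun a ha => ha.1.le) ?_
  by_contra hc
  obtain ⟨c, hc1, hc2⟩ := exists_between (not_le.mp hc)
  exact absurd (le_dstar hc2 fun t _ => h t) (not_le.mpr hc1)

lemma rho_total {p : Traj X} (hp : Flat p) (h : ∀ t, p.2 t ≠ none) : rho p = p := by
  have hd := dstar_total h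
  refine Prod.ext (if_pos h) (funext fun t => ?_)
  show (if (t : ℝ≥0∞) ≤ dstar p then p.2 t
      else if ∀ t', p.2 t' ≠ none then p.2 (dstar p).toNNReal else none) = p.2 t
  by_cases ht : (t : ℝ≥0∞) ≤ dstar p
  · rw [if_pos ht]
  · rw [if_neg ht, if_pos h, hd]
    exact (hp t (le_of_lt (hd ▸ not_le.mp ht))).symm

lemma rho_nontotal {p : Traj X} (h : ¬∀ t, p.2 t ≠ none) :
    rho p = ((⊤ : ℝ≥0∞), fun t : ℝ≥0 =>
      if (t : ℝ≥0∞) ≤ dstar p then p.2 t else none) := by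
  refine Prod.ext (if_neg h) (funext fun t => ?_)
  show (if (t : ℝ≥0∞) ≤ dstar p then p.2 t
      else if ∀ t', p.2 t' ≠ none then p.2 (dstar p).toNNReal else none) = _
  by_cases ht : (t : ℝ≥0∞) ≤ dstar p
  · rw [if_pos ht]; exact (if_pos ht).symm
  · rw [if_neg ht, if_neg h]; exact (if_neg ht).symm

lemma flat_rho {p : Traj X} (hp : Flat p) : Flat (rho p) := by
  by_cases h : ∀ t, p.2 t ≠ none
  · rw [rho_total hp h]; exact hp
  · rw [rho_nontotal h]
    intro t ht
    exact absurd (top_le_iff.mp ht) ENNReal.coe_ne_top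

end Lemmas2
section Lemmas3

variable {X Y : Type u} {f : X → Traj (Y ⊕ X)}

/-- One-step coherence of the iterates. -/
lemma coh_step : ∀ n (x : X) (t : ℝ≥0), (iter f n x).2 t ≠ none →
    (iter f (n + 1) x).2 t = (iter f n x).2 t := by
  intro n
  induction n with
  | zero => intro x t h; exact absurd rfl h
  | succ n ih =>
    intro x t h
    rw [iter_succ] at h ⊢
    rw [iter_succ]
    set p := f x with hp
    by_cases hd : p.1 = ⊤
    · rw [kl_top (Sum.elim eta (iter f n)) p hd] at h
      rw [kl_top (Sum.elim eta (iter f (n+1))) p hd, kl_top (Sum.elim eta (iter f n)) p hd]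
      simp only at h ⊢
      cases he : p.2 t with
      | none => (try rw [he] at h); exact absurd rfl h
      | some w =>
        try rw [he] at h
        cases w with
        | inl y => rfl
        | inr z => exact ih z 0 h
    · cases h2 : p.2 p.1.toNNReal with
      | none =>
        rw [kl_none (Sum.elim eta (iter f n)) p hd h2] at h
        rw [kl_none (Sum.elim eta (iter f (n+1))) p hd h2,
          kl_none (Sum.elim eta (iter f n)) p hd h2]
        simp only at h ⊢
        cases he : p.2 t with
        | none => (try rw [he] at h); exact absurd rfl h
        | some w =>
          try rw [he] at h
          cases w with
          | inl y => rfl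
          | inr z => exact ih z 0 h
      | some w =>
        rw [kl_some (Sum.elim eta (iter f n)) p hd h2] at h
        rw [kl_some (Sum.elim eta (iter f (n+1))) p hd h2,
          kl_some (Sum.elim eta (iter f n)) p hd h2]
        simp only at h ⊢
        by_cases hlt : (t : ℝ≥0∞) < p.1
        · simp only [if_pos hlt] at h ⊢
          cases he : p.2 t with
          | none => (try rw [he] at h); exact absurd rfl h
          | some w' =>
            try rw [he] at h
            cases w' with
            | inl y => rfl
            | inr z => exact ih z 0 h
        · simp only [if_neg hlt] at h ⊢
          cases w with
          | inl y => rfl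
          | inr z => exact ih z _ h

lemma coh {m n : ℕ} (hmn : m ≤ n) {x : X} {t : ℝ≥0} (h : (iter f m x).2 t ≠ none) :
    (iter f n x).2 t = (iter f m x).2 t := by
  induction n with
  | zero => rw [Nat.le_zero.mp hmn]
  | succ n ih =>
    rcases Nat.lt_or_ge m (n+1) with h1 | h1
    · have := ih (Nat.lt_succ_iff.mp h1)
      rw [coh_step n x t (this ▸ h), this]
    · rw [Nat.le_antisymm hmn h1]

lemma join_eval {n : ℕ} {x : X} {t : ℝ≥0} (h : (iter f n x).2 t ≠ none) :
    (iterStar f x).2 t = (iter f n x).2 t := by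
  show (if hh : ∃ i, (iter f i x).2 t ≠ none then (iter f hh.choose x).2 t else none) = _
  have hex : ∃ i, (iter f i x).2 t ≠ none := ⟨n, h⟩
  rw [dif_pos hex]
  have hc := hex.choose_spec
  rcases Nat.le_total hex.choose n with h1 | h1
  · rw [coh h1 hc]
  · exact coh h1 h

lemma join_none {x : X} {t : ℝ≥0} (h : ∀ n, (iter f n x).2 t = none) :
    (iterStar f x).2 t = none := by
  show (if hh : ∃ i, (iter f i x).2 t ≠ none then (iter f hh.choose x).2 t else none) = none
  rw [dif_neg (by push_neg; exact h)]

lemma join_cases (x : X) (t : ℝ≥0) :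
    (iterStar f x).2 t = none ∨
      ∃ n, (iter f n x).2 t ≠ none ∧ (iterStar f x).2 t = (iter f n x).2 t := by
  by_cases h : ∃ n, (iter f n x).2 t ≠ none
  · exact Or.inr ⟨h.choose, h.choose_spec, join_eval h.choose_spec⟩
  · push_neg at h
    exact Or.inl (join_none h)

lemma join_dur (x : X) : (iterStar f x).1 = ⨆ n, (iter f n x).1 := rfl

lemma flat_join (hf : ∀ x, Flat (f x)) (x : X) : Flat (iterStar f x) := by
  intro t ht
  set P := iterStar f x with hP
  have hfin : P.1 ≠ ⊤ := fun hc => absurd (top_le_iff.mp (hc ▸ ht)) ENNReal.coe_ne_top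
  set T := P.1.toNNReal with hT
  have hTc : (T : ℝ≥0∞) = P.1 := ENNReal.coe_toNNReal hfin
  have key : ∀ n, (iter f n x).2 t = (iter f n x).2 T := by
    intro n
    have hdn : (iter f n x).1 ≤ P.1 := le_iSup (fun n => (iter f n x).1) n
    rw [flat_iter hf n x t (le_trans hdn ht), flat_iter hf n x T (hTc ▸ hdn)]
  rcases join_cases (f := f) x t with h | ⟨n, hn, hv⟩
  · rcases join_cases (f := f) x T with h2 | ⟨n, hn, hv⟩
    · rw [h, h2]
    · have hn' : (iter f n x).2 t ≠ none := by rw [key n]; exact hn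
      rw [join_eval hn'] at h
      exact absurd h hn'
  · rw [hv, key n, join_eval (key n ▸ hn)]

end Lemmas3
section Lemmas4

variable {X Y : Type u} {f : X → Traj (Y ⊕ X)}

lemma join_eq_none {x : X} {t : ℝ≥0} (h : (iterStar f x).2 t = none) (n : ℕ) :
    (iter f n x).2 t = none := by
  by_contra hc
  rw [join_eval hc] at h
  exact hc h

lemma level_form {n : ℕ} {x : X} {t : ℝ≥0}
    (h : (f x).1 = ⊤ ∨ ((f x).1 ≠ ⊤ ∧ (f x).2 (f x).1.toNNReal = none) ∨ (t : ℝ≥0∞) < (f x).1) :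
    (iter f (n + 1) x).2 t = ((f x).2 t).bind fun z => (Sum.elim eta (iter f n) z).2 0 := by
  set p := f x with hp
  by_cases hd : p.1 = ⊤
  · rw [iter_succ, kl_top (Sum.elim eta (iter f n)) p hd]
  · cases h2 : p.2 p.1.toNNReal with
    | none => rw [iter_succ, kl_none (Sum.elim eta (iter f n)) p hd h2]
    | some w =>
      have hlt : (t : ℝ≥0∞) < p.1 := by
        rcases h with h | h | h
        · exact absurd h hd
        · exact absurd (h2.symm.trans h.2) (Option.some_ne_none w)
        · exact h
      rw [iter_succ, kl_some (Sum.elim eta (iter f n)) p hd h2]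
      simp only [if_pos hlt]

lemma join_form {x : X} {t : ℝ≥0}
    (h : (f x).1 = ⊤ ∨ ((f x).1 ≠ ⊤ ∧ (f x).2 (f x).1.toNNReal = none) ∨ (t : ℝ≥0∞) < (f x).1)
    (hj : (iterStar f x).2 t ≠ none) : (f x).2 t ≠ none := by
  rcases join_cases (f := f) x t with hc | ⟨n, hn, _⟩
  · exact absurd hc hj
  · cases n with
    | zero => exact absurd rfl hn
    | succ n =>
      rw [level_form h] at hn
      intro he
      rw [he] at hn
      exact hn rfl

lemma join_shift {x : X} {z : X} (hd : (f x).1 ≠ ⊤)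
    (hw : (f x).2 (f x).1.toNNReal = some (Sum.inr z)) (s : ℝ≥0) :
    (iterStar f x).2 ((f x).1.toNNReal + s) = (iterStar f z).2 s := by
  set p := f x with hp
  set dT := p.1.toNNReal with hdT
  have hcoe : (dT : ℝ≥0∞) = p.1 := ENNReal.coe_toNNReal hd
  have hnlt : ¬((dT + s : ℝ≥0) : ℝ≥0∞) < p.1 := by
    rw [ENNReal.coe_add, hcoe]
    exact not_lt.2 le_self_add
  have hsub : dT + s - dT = s := by rw [add_tsub_cancel_left]
  have hlev : ∀ m, (iter f (m + 1) x).2 (dT + s) = (iter f m z).2 s := by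
    intro m
    rw [iter_succ, kl_some (Sum.elim eta (iter f m)) p hd hw]
    simp only [if_neg hnlt, Sum.elim_inr, hsub]
    rw [← hdT, hsub]
  rcases join_cases (f := f) z s with hc | ⟨n, hn, hv⟩
  · rw [hc]
    refine join_none fun n => ?_
    cases n with
    | zero => rfl
    | succ n => rw [hlev n]; exact join_eq_none hc n
  · have hne : (iter f (n + 1) x).2 (dT + s) ≠ none := by rw [hlev n]; exact hn
    rw [join_eval hne, hlev n, hv]

lemma total_step (hf : ∀ x, Flat (f x)) {x : X}
    (ht : ∀ u : ℝ≥0, (iterStar f x).2 u ≠ none) : ∀ u : ℝ≥0, (f x).2 u ≠ none := by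
  by_cases hd : (f x).1 = ⊤
  · exact fun u => join_form (Or.inl hd) (ht u)
  · have hnn : (f x).2 (f x).1.toNNReal ≠ none := by
      intro h2
      refine ht (f x).1.toNNReal (join_none fun n => ?_)
      cases n with
      | zero => rfl
      | succ n =>
        rw [level_form (Or.inr (Or.inl ⟨hd, h2⟩)), h2]
        rfl
    intro u
    by_cases hu : (u : ℝ≥0∞) < (f x).1
    · exact join_form (Or.inr (Or.inr hu)) (ht u)
    · rw [hf x u (not_lt.mp hu)]
      exact hnn

/-- The values at time `0` of the iterates of `f` and of `ρ ∘ f` agree. -/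
lemma valzero (hf : ∀ x, Flat (f x)) :
    ∀ n (z : X), (iter f n z).2 0 = (iter (fun x' => rho (f x')) n z).2 0 := by
  intro n
  induction n with
  | zero => intro z; rfl
  | succ n ih =>
    intro z
    set rf := fun x' => rho (f x') with hrf
    set p := f z with hp
    have hbind : ∀ o : Option (Y ⊕ X),
        (o.bind fun w => (Sum.elim eta (iter f n) w).2 0) =
          o.bind fun w => (Sum.elim eta (iter rf n) w).2 0 := by
      intro o
      cases o with
      | none => rfl
      | some w =>
        cases w with
        | inl y => rfl
        | inr z' => exact ih z'
    by_cases htot : ∀ u, p.2 u ≠ none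
    · have hq : rf z = p := rho_total (hf z) htot
      rw [iter_succ, iter_succ, hrf]
      simp only
      rw [← hrf]
      have hq' : rho (f z) = p := hq
      rw [hq']
      by_cases hd : p.1 = ⊤
      · rw [kl_top (Sum.elim eta (iter f n)) p hd, kl_top (Sum.elim eta (iter rf n)) p hd]
        exact hbind (p.2 0)
      · cases h2 : p.2 p.1.toNNReal with
        | none =>
          rw [kl_none (Sum.elim eta (iter f n)) p hd h2,
            kl_none (Sum.elim eta (iter rf n)) p hd h2]
          exact hbind (p.2 0)
        | some w =>
          rw [kl_some (Sum.elim eta (iter f n)) p hd h2,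
            kl_some (Sum.elim eta (iter rf n)) p hd h2]
          try simp only
          by_cases h0 : ((0 : ℝ≥0) : ℝ≥0∞) < p.1
          · rw [if_pos h0, if_pos h0]
            exact hbind (p.2 0)
          · rw [if_neg h0, if_neg h0]
            have hz : p.1.toNNReal = 0 := by
              have : p.1 = 0 := by
                by_contra hc
                exact h0 (by simpa using pos_iff_ne_zero.mpr hc)
              simp [this]
            have hzz : (0 : ℝ≥0) - p.1.toNNReal = 0 := tsub_eq_zero_of_le zero_le
            rw [hzz]
            cases w with
            | inl y => rfl
            | inr z' => exact ih z'
    · have hq : rf z = ((⊤ : ℝ≥0∞), fun t : ℝ≥0 =>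
          if (t : ℝ≥0∞) ≤ dstar p then p.2 t else none) := rho_nontotal htot
      rw [iter_succ, iter_succ, hrf]
      simp only
      rw [← hrf]
      have hq' : rho (f z) = ((⊤ : ℝ≥0∞), fun t : ℝ≥0 =>
          if (t : ℝ≥0∞) ≤ dstar p then p.2 t else none) := hq
      rw [hq', kl_top (Sum.elim eta (iter rf n)) _ rfl]
      simp only
      have he0 : (if ((0 : ℝ≥0) : ℝ≥0∞) ≤ dstar p then p.2 0 else none) = p.2 0 :=
        if_pos zero_le
      rw [he0]
      by_cases hd : p.1 = ⊤
      · rw [kl_top (Sum.elim eta (iter f n)) p hd]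
        exact hbind (p.2 0)
      · cases h2 : p.2 p.1.toNNReal with
        | none =>
          rw [kl_none (Sum.elim eta (iter f n)) p hd h2]
          exact hbind (p.2 0)
        | some w =>
          rw [kl_some (Sum.elim eta (iter f n)) p hd h2]
          try simp only
          by_cases h0 : ((0 : ℝ≥0) : ℝ≥0∞) < p.1
          · rw [if_pos h0]
            exact hbind (p.2 0)
          · rw [if_neg h0]
            have hp1 : p.1 = 0 := by
              by_contra hc
              exact h0 (by simpa using pos_iff_ne_zero.mpr hc)
            have hz : p.1.toNNReal = 0 := by simp [hp1]
            have hzz : (0 : ℝ≥0) - p.1.toNNReal = 0 := tsub_eq_zero_of_le zero_le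
            have he00 : p.2 0 = some w := by rw [← h2, hz]
            rw [hzz, he00]
            cases w with
            | inl y => rfl
            | inr z' => exact ih z'

end Lemmas4
section MainLemma

variable {X Y : Type u}

lemma pair_of_eq {f g : X → Traj (Y ⊕ X)} {m : ℕ} {x : X} {t : ℝ≥0}
    (heq : (iter g m x).2 t = (iter f m x).2 t) :
    ((iter f m x).2 t ≠ none → (iterStar g x).2 t = (iter f m x).2 t) ∧
    ((iter g m x).2 t ≠ none → (iterStar f x).2 t = (iter g m x).2 t) := by
  constructor
  · intro h
    have hg : (iter g m x).2 t ≠ none := by rw [heq]; exact h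
    rw [join_eval hg, heq]
  · intro h
    have hfne : (iter f m x).2 t ≠ none := by rw [← heq]; exact h
    rw [join_eval hfne, ← heq]

lemma main_lemma {f : X → Traj (Y ⊕ X)} (hf : ∀ x, Flat (f x)) :
    ∀ n (x : X) (t : ℝ≥0),
    ((∀ s : ℝ≥0, s < t → (iterStar f x).2 s ≠ none) ∨
      (∀ s : ℝ≥0, s < t → (iterStar (fun x' => rho (f x')) x).2 s ≠ none)) →
    (((iter f n x).2 t ≠ none →
        (iterStar (fun x' => rho (f x')) x).2 t = (iter f n x).2 t) ∧
     ((iter (fun x' => rho (f x')) n x).2 t ≠ none →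
        (iterStar f x).2 t = (iter (fun x' => rho (f x')) n x).2 t)) := by
  intro n
  induction n with
  | zero =>
    intro x t _
    exact ⟨fun h => absurd rfl h, fun h => absurd rfl h⟩
  | succ n ih =>
    intro x t hyp
    set rf := fun x' => rho (f x') with hrf
    set p := f x with hp
    set dT := p.1.toNNReal with hdT
    have hbind : ∀ o : Option (Y ⊕ X),
        (o.bind fun w => (Sum.elim eta (iter rf n) w).2 0) =
          o.bind fun w => (Sum.elim eta (iter f n) w).2 0 := by
      intro o
      cases o with
      | none => rfl
      | some w =>
        cases w with
        | inl y => rfl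
        | inr z' => exact (valzero hf n z').symm
    by_cases htot : ∀ u, p.2 u ≠ none
    · -- f x is total, so rho (f x) = f x
      have hq : rho (f x) = p := rho_total (hf x) htot
      have hq1 : (rf x).1 = p.1 := by rw [hrf]; simp only; rw [hq]
      by_cases hd : p.1 = ⊤
      · refine pair_of_eq ?_
        have lvL : (iter f (n + 1) x).2 t =
            (p.2 t).bind fun w => (Sum.elim eta (iter f n) w).2 0 :=
          level_form (Or.inl hd)
        have lvR : (iter rf (n + 1) x).2 t =
            (p.2 t).bind fun w => (Sum.elim eta (iter rf n) w).2 0 := by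
          have := level_form (f := rf) (n := n) (x := x) (t := t)
            (Or.inl (by rw [hq1]; exact hd))
          rw [this, hrf]
          simp only
          rw [hq]
        rw [lvL, lvR]
        exact hbind _
      · cases h2 : p.2 dT with
        | none => exact absurd h2 (htot dT)
        | some w =>
          by_cases hlt : (t : ℝ≥0∞) < p.1
          · refine pair_of_eq ?_
            have lvL : (iter f (n + 1) x).2 t =
                (p.2 t).bind fun w => (Sum.elim eta (iter f n) w).2 0 :=
              level_form (Or.inr (Or.inr hlt))
            have lvR : (iter rf (n + 1) x).2 t =
                (p.2 t).bind fun w => (Sum.elim eta (iter rf n) w).2 0 := by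
              have := level_form (f := rf) (n := n) (x := x) (t := t)
                (Or.inr (Or.inr (by rw [hq1]; exact hlt)))
              rw [this, hrf]
              simp only
              rw [hq]
            rw [lvL, lvR]
            exact hbind _
          · -- beyond the duration of the first segment
            have lvL : (iter f (n + 1) x).2 t =
                (Sum.elim eta (iter f n) w).2 (t - dT) := by
              rw [iter_succ, kl_some (Sum.elim eta (iter f n)) p hd h2]
              simp only [if_neg hlt]
              rfl
            have lvR : (iter rf (n + 1) x).2 t =
                (Sum.elim eta (iter rf n) w).2 (t - dT) := by
              rw [iter_succ]
              show (kl (Sum.elim eta (iter rf n)) (rho (f x))).2 t = _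
              rw [hq, kl_some (Sum.elim eta (iter rf n)) p hd h2]
              simp only [if_neg hlt]
              rfl
            cases w with
            | inl y =>
              refine pair_of_eq ?_
              rw [lvL, lvR]
              rfl
            | inr z =>
              have hq2 : (rf x).2 dT = some (Sum.inr z) := by
                rw [hrf]; simp only; rw [hq, ← hdT] at *; rw [hq]; exact h2
              have hcoe : (dT : ℝ≥0∞) = p.1 := ENNReal.coe_toNNReal hd
              have hdTt : dT ≤ t := by
                have : (dT : ℝ≥0∞) ≤ (t : ℝ≥0∞) := hcoe ▸ not_lt.mp hlt
                exact_mod_cast this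
              have hshiftf : ∀ s : ℝ≥0, (iterStar f x).2 (dT + s) = (iterStar f z).2 s :=
                join_shift hd h2
              have hshiftr : ∀ s : ℝ≥0, (iterStar rf x).2 (dT + s) = (iterStar rf z).2 s := by
                intro s
                have := join_shift (f := rf) (x := x) (z := z)
                  (by rw [hq1]; exact hd) (by rw [hq1, ← hdT]; exact hq2) s
                rw [hq1, ← hdT] at this
                exact this
              have hyp' : (∀ s : ℝ≥0, s < t - dT → (iterStar f z).2 s ≠ none) ∨
                  (∀ s : ℝ≥0, s < t - dT → (iterStar rf z).2 s ≠ none) := by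
                rcases hyp with hP | hQ
                · refine Or.inl fun s hs => ?_
                  rw [← hshiftf s]
                  exact hP (dT + s) (by
                    have := add_lt_add_left (lt_of_lt_of_le hs tsub_le_self) dT
                    calc dT + s < dT + (t - dT) := (add_lt_add_iff_left dT).2 hs
                    _ = t := add_tsub_cancel_of_le hdTt)
                · refine Or.inr fun s hs => ?_
                  rw [← hshiftr s]
                  exact hQ (dT + s) (by
                    calc dT + s < dT + (t - dT) := (add_lt_add_iff_left dT).2 hs
                    _ = t := add_tsub_cancel_of_le hdTt)
              obtain ⟨ih1, ih2⟩ := ih z (t - dT) hyp'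
              constructor
              · intro hL
                rw [lvL] at hL ⊢
                simp only [Sum.elim_inr] at hL ⊢
                calc (iterStar rf x).2 t = (iterStar rf x).2 (dT + (t - dT)) := by
                      rw [add_tsub_cancel_of_le hdTt]
                  _ = (iterStar rf z).2 (t - dT) := hshiftr _
                  _ = (iter f n z).2 (t - dT) := ih1 hL
              · intro hR
                rw [lvR] at hR ⊢
                simp only [Sum.elim_inr] at hR ⊢
                calc (iterStar f x).2 t = (iterStar f x).2 (dT + (t - dT)) := by
                      rw [add_tsub_cancel_of_le hdTt]
                  _ = (iterStar f z).2 (t - dT) := hshiftf _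
                  _ = (iter rf n z).2 (t - dT) := ih2 hR
    · -- f x is not total
      have hq : rho (f x) = ((⊤ : ℝ≥0∞), fun u : ℝ≥0 =>
          if (u : ℝ≥0∞) ≤ dstar p then p.2 u else none) := rho_nontotal htot
      have hq1 : (rf x).1 = ⊤ := by rw [hrf]; simp only; rw [hq]
      have lvR : ∀ m (u : ℝ≥0), (iter rf (m + 1) x).2 u =
          (if (u : ℝ≥0∞) ≤ dstar p then p.2 u else none).bind
            fun w => (Sum.elim eta (iter rf m) w).2 0 := by
        intro m u
        have := level_form (f := rf) (n := m) (x := x) (t := u) (Or.inl hq1)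
        rw [this, hrf]
        simp only
        rw [hq]
      -- the defined-below-t property for the first segment
      have hdefb : ((f x).1 = ⊤ ∨ ((f x).1 ≠ ⊤ ∧ (f x).2 (f x).1.toNNReal = none) ∨
            ∀ s : ℝ≥0, s < t → (s : ℝ≥0∞) < p.1) →
          ∀ s : ℝ≥0, s < t → p.2 s ≠ none := by
        intro hside s hs
        rcases hyp with hP | hQ
        · refine join_form ?_ (hP s hs)
          rcases hside with h | h | h
          · exact Or.inl h
          · exact Or.inr (Or.inl h)
          · exact Or.inr (Or.inr (h s hs))
        · have hne := hQ s hs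
          rcases join_cases (f := rf) x s with hc | ⟨m, hm, _⟩
          · exact absurd hc hne
          · cases m with
            | zero => exact absurd rfl hm
            | succ m =>
              rw [lvR m s] at hm
              by_cases hsD : (s : ℝ≥0∞) ≤ dstar p
              · rw [if_pos hsD] at hm
                intro hzz
                rw [hzz] at hm
                exact hm rfl
              · rw [if_neg hsD] at hm
                exact absurd rfl hm
      by_cases hd : p.1 = ⊤
      · refine pair_of_eq ?_
        have lvL : (iter f (n + 1) x).2 t =
            (p.2 t).bind fun w => (Sum.elim eta (iter f n) w).2 0 :=
          level_form (Or.inl hd)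
        rw [lvL, lvR n t]
        by_cases hne : p.2 t = none
        · rw [hne]
          split <;> simp [hne]
        · have htD : (t : ℝ≥0∞) ≤ dstar p := by
            refine le_dstar (hd ▸ ENNReal.coe_lt_top) fun u hu => ?_
            exact hdefb (Or.inl hd) u (by exact_mod_cast hu)
          rw [if_pos htD]
          exact hbind _
      · cases h2 : p.2 dT with
        | none =>
          refine pair_of_eq ?_
          have lvL : (iter f (n + 1) x).2 t =
              (p.2 t).bind fun w => (Sum.elim eta (iter f n) w).2 0 :=
            level_form (Or.inr (Or.inl ⟨hd, h2⟩))
          rw [lvL, lvR n t]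
          cases hne : p.2 t with
          | none => split <;> simp [hne]
          | some w =>
            have hlt : (t : ℝ≥0∞) < p.1 := by
              by_contra hc
              rw [hf x t (not_lt.mp hc)] at hne
              exact absurd (hne.symm.trans h2) (Option.some_ne_none w)
            have htD : (t : ℝ≥0∞) ≤ dstar p := by
              refine le_dstar hlt fun u hu => ?_
              have hut : (u : ℝ≥0) < t := by exact_mod_cast hu
              exact hdefb (Or.inr (Or.inl ⟨hd, h2⟩)) u hut
            rw [if_pos htD]
            exact hbind _
        | some w =>
          -- there is a hole strictly inside the first segment
          obtain ⟨t0, ht0⟩ : ∃ u : ℝ≥0, p.2 u = none := by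
            by_contra hc
            push_neg at hc
            exact htot hc
          have hh0 : (t0 : ℝ≥0∞) < p.1 := by
            by_contra hc
            rw [hf x t0 (not_lt.mp hc)] at ht0
            exact absurd (ht0.symm.trans h2).symm (Option.some_ne_none w)
          by_cases hlt : (t : ℝ≥0∞) < p.1
          · refine pair_of_eq ?_
            have lvL : (iter f (n + 1) x).2 t =
                (p.2 t).bind fun w => (Sum.elim eta (iter f n) w).2 0 :=
              level_form (Or.inr (Or.inr hlt))
            rw [lvL, lvR n t]
            cases hne : p.2 t with
            | none => split <;> simp [hne]
            | some w' =>
              have htD : (t : ℝ≥0∞) ≤ dstar p := by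
                refine le_dstar hlt fun u hu => ?_
                have hut : (u : ℝ≥0) < t := by exact_mod_cast hu
                refine hdefb (Or.inr (Or.inr fun s hs => ?_)) u hut
                exact lt_trans (by exact_mod_cast hs) hlt
              rw [if_pos htD]
              exact hbind _
          · -- impossible: the hole lies strictly before t
            exfalso
            have ht0t : t0 < t := by
              have : (t0 : ℝ≥0∞) < (t : ℝ≥0∞) := lt_of_lt_of_le hh0 (not_lt.mp hlt)
              exact_mod_cast this
            rcases hyp with hP | hQ
            · refine hP t0 ht0t (join_none fun m => ?_)
              cases m with
              | zero => rfl
              | succ m =>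
                rw [level_form (Or.inr (Or.inr hh0)), ht0]
                rfl
            · refine hQ t0 ht0t (join_none fun m => ?_)
              cases m with
              | zero => rfl
              | succ m =>
                rw [lvR m t0]
                split <;> simp [ht0]

end MainLemma
section Durations

variable {X Y : Type u}

lemma ev_eq {f : X → Traj (Y ⊕ X)} (hf : ∀ x, Flat (f x)) {x : X} {t : ℝ≥0}
    (hyp : (∀ s : ℝ≥0, s < t → (iterStar f x).2 s ≠ none) ∨
      (∀ s : ℝ≥0, s < t → (iterStar (fun x' => rho (f x')) x).2 s ≠ none)) :
    (iterStar f x).2 t = (iterStar (fun x' => rho (f x')) x).2 t := by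
  rcases join_cases (f := f) x t with hc | ⟨n, hn, hv⟩
  · rcases join_cases (f := fun x' => rho (f x')) x t with hc2 | ⟨m, hm, _⟩
    · rw [hc, hc2]
    · have := (main_lemma hf m x t hyp).2 hm
      rw [hc] at this
      exact absurd this.symm hm
  · rw [hv, ((main_lemma hf n x t hyp).1 hn).symm]

lemma dur_le {f : X → Traj (Y ⊕ X)} (hf : ∀ x, Flat (f x)) :
    ∀ n (x : X), (∀ u : ℝ≥0, (iterStar f x).2 u ≠ none) →
      (iter f n x).1 ≤ (iterStar (fun x' => rho (f x')) x).1 ∧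
      (iter (fun x' => rho (f x')) n x).1 ≤ (iterStar f x).1 := by
  intro n
  induction n with
  | zero => exact fun x _ => ⟨zero_le, zero_le⟩
  | succ n ih =>
    intro x htotal
    set rf := fun x' => rho (f x') with hrf
    set p := f x with hp
    set dT := p.1.toNNReal with hdT
    have hfe : ∀ u, p.2 u ≠ none := total_step hf htotal
    have hq : rho (f x) = p := rho_total (hf x) hfe
    have hq1 : (rf x).1 = p.1 := by rw [hrf]; simp only; rw [hq]
    by_cases hd : p.1 = ⊤
    · have hL : (iter f (n + 1) x).1 = ⊤ := by
        rw [iter_succ, kl_top (Sum.elim eta (iter f n)) p hd]; exact hd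
      have hR : (iter rf (n + 1) x).1 = ⊤ := by
        rw [iter_succ]
        show (kl (Sum.elim eta (iter rf n)) (rho (f x))).1 = ⊤
        rw [hq, kl_top (Sum.elim eta (iter rf n)) p hd]; exact hd
      constructor
      · rw [hL]
        exact le_trans (le_of_eq hR.symm) (le_iSup (fun m => (iter rf m x).1) (n + 1))
      · rw [hR]
        exact le_trans (le_of_eq hL.symm) (le_iSup (fun m => (iter f m x).1) (n + 1))
    · cases h2 : p.2 dT with
      | none => exact absurd h2 (hfe dT)
      | some w =>
        have hLd : ∀ m, (iter f (m + 1) x).1 = p.1 + (Sum.elim eta (iter f m) w).1 := by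
          intro m
          rw [iter_succ, kl_some (Sum.elim eta (iter f m)) p hd h2]
        have hRd : ∀ m, (iter rf (m + 1) x).1 = p.1 + (Sum.elim eta (iter rf m) w).1 := by
          intro m
          rw [iter_succ]
          show (kl (Sum.elim eta (iter rf m)) (rho (f x))).1 = _
          rw [hq, kl_some (Sum.elim eta (iter rf m)) p hd h2]
        cases w with
        | inl y =>
          constructor
          · rw [hLd n]
            exact le_trans (le_of_eq (hRd n).symm) (le_iSup (fun m => (iter rf m x).1) (n + 1))
          · rw [hRd n]
            exact le_trans (le_of_eq (hLd n).symm) (le_iSup (fun m => (iter f m x).1) (n + 1))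
        | inr z =>
          have htotz : ∀ u : ℝ≥0, (iterStar f z).2 u ≠ none := by
            intro u
            rw [← join_shift hd h2 u]
            exact htotal _
          obtain ⟨ihA, ihB⟩ := ih z htotz
          constructor
          · rw [hLd n]
            simp only [Sum.elim_inr]
            calc p.1 + (iter f n z).1 ≤ p.1 + (iterStar rf z).1 :=
                  add_le_add (le_refl _) ihA
              _ = ⨆ m, (p.1 + (iter rf m z).1) := by
                  rw [join_dur, ENNReal.add_iSup]
              _ ≤ (iterStar rf x).1 := by
                  refine iSup_le fun m => ?_
                  refine le_trans (le_of_eq ?_) (le_iSup (fun k => (iter rf k x).1) (m + 1))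
                  rw [hRd m]; rfl
          · rw [hRd n]
            simp only [Sum.elim_inr]
            calc p.1 + (iter rf n z).1 ≤ p.1 + (iterStar f z).1 :=
                  add_le_add (le_refl _) ihB
              _ = ⨆ m, (p.1 + (iter f m z).1) := by
                  rw [join_dur, ENNReal.add_iSup]
              _ ≤ (iterStar f x).1 := by
                  refine iSup_le fun m => ?_
                  refine le_trans (le_of_eq ?_) (le_iSup (fun k => (iter f k x).1) (m + 1))
                  rw [hLd m]; rfl

end Durations
section Final

variable {X : Type u}

lemma dstar_eq_of {p : Traj X} (hp : Flat p) (hnt : ¬∀ t, p.2 t ≠ none) :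
    dstar p = sSup {s : ℝ≥0∞ | ∀ u : ℝ≥0, (u : ℝ≥0∞) < s → p.2 u ≠ none} := by
  set S' := {s : ℝ≥0∞ | ∀ u : ℝ≥0, (u : ℝ≥0∞) < s → p.2 u ≠ none} with hS'
  obtain ⟨t0, ht0⟩ : ∃ u : ℝ≥0, p.2 u = none := by
    push_neg at hnt
    exact hnt
  have hrle : sSup S' ≤ (t0 : ℝ≥0∞) := by
    refine sSup_le fun a ha => ?_
    by_contra hc
    exact ha t0 (not_le.mp hc) ht0
  have hrp : sSup S' ≤ p.1 := by
    by_contra hc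
    replace hc := not_le.mp hc
    have hfin : p.1 ≠ ⊤ := (lt_of_lt_of_le hc (le_trans hrle le_top)).ne
    have hfin2 : p.1 ≠ ⊤ := fun h => by
      rw [h] at hc
      exact absurd (le_trans hc.le hrle) (by simp)
    have hdef : p.2 p.1.toNNReal ≠ none := by
      obtain ⟨a, haS, hlt⟩ := lt_sSup_iff.mp hc
      exact haS p.1.toNNReal (by rw [ENNReal.coe_toNNReal hfin2]; exact hlt)
    by_cases h01 : p.1 ≤ (t0 : ℝ≥0∞)
    · rw [hp t0 h01] at ht0
      exact hdef ht0
    · obtain ⟨a, haS, hlt⟩ := lt_sSup_iff.mp (lt_trans (not_le.mp h01) hc)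
      exact haS t0 hlt ht0
  refine le_antisymm (sSup_le fun a ha => le_sSup ha.2) (sSup_le fun a ha => ?_)
  have hap : a ≤ p.1 := le_trans (le_sSup ha) hrp
  rcases lt_or_eq_of_le hap with hlt | heq
  · exact le_sSup ⟨hlt, ha⟩
  · by_contra hc
    replace hc := not_le.mp hc
    obtain ⟨c, hc1, hc2⟩ := exists_between hc
    exact absurd (le_sSup (s := {s : ℝ≥0∞ | s < p.1 ∧ ∀ u : ℝ≥0, (u : ℝ≥0∞) < s → p.2 u ≠ none})
      (show c ∈ _ from ⟨heq ▸ hc2, fun u hu => ha u (lt_trans hu hc2)⟩)) (not_le.mpr hc1)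

end Final

theorem rho_iteration_congruent' {X Y : Type u} (f : X → Traj (Y ⊕ X))
    (hf : ∀ x, Flat (f x)) (x : X) :
    rho (iterStar f x) = rho (iterStar (fun x' => rho (f x')) x) := by
  set rf := fun x' => rho (f x') with hrf
  have hfr : ∀ x', Flat (rf x') := fun x' => flat_rho (hf x')
  set P := iterStar f x with hP
  set Q := iterStar rf x with hQ
  have hflatP : Flat P := flat_join hf x
  have hflatQ : Flat Q := flat_join hfr x
  by_cases htot : ∀ u : ℝ≥0, P.2 u ≠ none
  · have hev : ∀ u : ℝ≥0, P.2 u = Q.2 u := fun u =>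
      ev_eq hf (Or.inl fun s _ => htot s)
    have hPQ : P = Q := by
      refine Prod.ext ?_ (funext hev)
      rw [hP, hQ]
      refine le_antisymm ?_ ?_
      · exact iSup_le fun n => (dur_le hf n x htot).1
      · exact iSup_le fun n => (dur_le hf n x htot).2
    rw [hPQ]
  · have hqtot : ¬∀ u : ℝ≥0, Q.2 u ≠ none := by
      intro hc
      apply htot
      intro u
      rw [ev_eq hf (Or.inr fun s _ => hc s)]
      exact hc u
    have hE : ∀ u : ℝ≥0, (∀ s : ℝ≥0, s < u → P.2 s ≠ none) → P.2 u = Q.2 u :=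
      fun u hu => ev_eq hf (Or.inl hu)
    have hE' : ∀ u : ℝ≥0, (∀ s : ℝ≥0, s < u → Q.2 s ≠ none) → P.2 u = Q.2 u :=
      fun u hu => ev_eq hf (Or.inr hu)
    have hSeq : {s : ℝ≥0∞ | ∀ u : ℝ≥0, (u : ℝ≥0∞) < s → P.2 u ≠ none} =
        {s : ℝ≥0∞ | ∀ u : ℝ≥0, (u : ℝ≥0∞) < s → Q.2 u ≠ none} := by
      ext a
      constructor
      · intro ha u hu
        rw [← hE u fun s hs => ha s (lt_trans (ENNReal.coe_lt_coe.2 hs) hu)]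
        exact ha u hu
      · intro ha u hu
        rw [hE' u fun s hs => ha s (lt_trans (ENNReal.coe_lt_coe.2 hs) hu)]
        exact ha u hu
    have hdeq : dstar P = dstar Q := by
      rw [dstar_eq_of hflatP htot, dstar_eq_of hflatQ hqtot, hSeq]
    rw [rho_nontotal htot, rho_nontotal hqtot, hdeq]
    refine Prod.ext rfl (funext fun u => ?_)
    by_cases hu : (u : ℝ≥0∞) ≤ dstar Q
    · simp only [if_pos hu]
      refine hE u fun s hs => ?_
      have hsr : (s : ℝ≥0∞) < sSup {s : ℝ≥0∞ | ∀ v : ℝ≥0, (v : ℝ≥0∞) < s → P.2 v ≠ none} := by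
        rw [← dstar_eq_of hflatP htot, hdeq]
        exact lt_of_lt_of_le (ENNReal.coe_lt_coe.2 hs) hu
      obtain ⟨a, haS, hlt⟩ := lt_sSup_iff.mp hsr
      exact haS s hlt
    · simp only [if_neg hu]

/-- `(ρ, υ)` is an iteration-congruent retraction: `ρ (f^‡ x) = ρ ((ρ ∘ f)^‡ x)`. -/
theorem rho_iteration_congruent {X Y : Type u} (f : X → Traj (Y ⊕ X))
    (hf : ∀ x, Flat (f x)) (x : X) :
    rho (iterStar f x) = rho (iterStar (fun x' => rho (f x')) x) := by
  exact rho_iteration_congruent' f hf x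
end
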